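/- For a qubit state ρ = (I + r⃗·σ⃗)/2 with r⃗ = m·m⃗ + p·n⃗ (m⃗ ⊥ n⃗ unit vectors, m, p ≥ 0, m² + p² < 1, m + p ≤ 1), the matrix Z = I − n⃗·σ⃗ is positive semidefinite and satisfies Z = I − ∑_{i≠j} y_{ij}|m_j⟩⟨m_i| with y_12 = y_21 = 1, where |m_1⟩⟨m_1| = (I + m⃗·σ⃗)/2, |m_2⟩⟨m_2| = (I − m⃗·σ⃗)/2; consequently, any nonnegative p₁, p₂ with ρ ⪰ p₁|m_1⟩⟨m_1| + p₂|m_2⟩⟨m_2| satisfy p₁ + p₂ ≤ tr(Zρ) = 1 − p. -/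

import Mathlib

open Matrix BigOperators
open scoped ComplexOrder

noncomputable def σx : Matrix (Fin 2) (Fin 2) ℂ := !![0, 1; 1, 0]
noncomputable def σy : Matrix (Fin 2) (Fin 2) ℂ := !![0, -Complex.I; Complex.I, 0]
noncomputable def σz : Matrix (Fin 2) (Fin 2) ℂ := !![1, 0; 0, -1]

/-- `a⃗·σ⃗` for a real Bloch vector `a⃗ ∈ ℝ³`. -/
noncomputable def pauli (a : Fin 3 → ℝ) : Matrix (Fin 2) (Fin 2) ℂ :=
  a 0 • σx + a 1 • σy + a 2 • σz


lemma pauli_entries (a : Fin 3 → ℝ) :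
    pauli a = !![(a 2 : ℂ), a 0 - a 1 * Complex.I; a 0 + a 1 * Complex.I, -a 2] := by
  ext i j
  fin_cases i <;> fin_cases j <;>
    simp [pauli, σx, σy, σz, Complex.real_smul] <;> ring

lemma pauli_conjT (a : Fin 3 → ℝ) : (pauli a)ᴴ = pauli a := by
  rw [pauli_entries]
  ext i j
  fin_cases i <;> fin_cases j <;>
    simp [conjTranspose_apply, Complex.ext_iff]

lemma pauli_mul_self (a : Fin 3 → ℝ) (h : ∑ i, a i * a i = 1) :
    pauli a * pauli a = 1 := by
  rw [Fin.sum_univ_three] at h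
  have h' : (a 0 : ℂ) * a 0 + a 1 * a 1 + a 2 * a 2 = 1 := by exact_mod_cast h
  rw [pauli_entries, Matrix.mul_fin_two]
  ext i j
  fin_cases i <;> fin_cases j <;> simp [Matrix.one_apply]
  · linear_combination h' - (a 1 : ℂ) ^ 2 * Complex.I_mul_I
  · ring
  · ring
  · linear_combination h' - (a 1 : ℂ) ^ 2 * Complex.I_mul_I

lemma trace_pauli (a : Fin 3 → ℝ) : (pauli a).trace = 0 := by
  rw [pauli_entries, Matrix.trace_fin_two]; simp

lemma trace_pauli_mul (a b : Fin 3 → ℝ) :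
    (pauli a * pauli b).trace = ((2 * ∑ i, a i * b i : ℝ) : ℂ) := by
  rw [pauli_entries, pauli_entries, Matrix.mul_fin_two, Matrix.trace_fin_two,
    Fin.sum_univ_three]
  simp only [Matrix.of_apply, Matrix.cons_val', Matrix.cons_val_zero, Matrix.cons_val_one,
    Matrix.head_cons, Matrix.empty_val', Matrix.cons_val_fin_one, Matrix.head_fin_const]
  push_cast
  linear_combination (-2 * (a 1 : ℂ) * b 1) * Complex.I_mul_I

lemma pauli_add_smul (x y : ℝ) (a b : Fin 3 → ℝ) :
    pauli (x • a + y • b) = x • pauli a + y • pauli b := by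
  simp only [pauli, Pi.add_apply, Pi.smul_apply, smul_eq_mul]
  module

lemma psd_trace_nonneg {M : Matrix (Fin 2) (Fin 2) ℂ} (hM : M.PosSemidef) :
    0 ≤ M.trace := by
  have h : ∀ i, 0 ≤ M i i := by
    intro i
    exact hM.diag_nonneg
  rw [Matrix.trace]
  exact Finset.sum_nonneg fun i _ => h i

lemma pauli_neg (a : Fin 3 → ℝ) : pauli (-a) = -pauli a := by
  simp only [pauli, Pi.neg_apply]
  module

lemma trace_key (a b : Fin 3 → ℝ) :
    ((1 - pauli a) * ((2⁻¹ : ℝ) • ((1 : Matrix (Fin 2) (Fin 2) ℂ) + pauli b))).trace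
      = ((1 - ∑ i, a i * b i : ℝ) : ℂ) := by
  rw [mul_smul_comm, Matrix.trace_smul, mul_add (1 - pauli a), sub_mul, sub_mul,
    Matrix.one_mul, Matrix.one_mul, Matrix.mul_one, Matrix.trace_add, Matrix.trace_sub,
    Matrix.trace_sub, Matrix.trace_one, trace_pauli_mul]
  simp only [trace_pauli, Fintype.card_fin]
  rw [Complex.real_smul]
  push_cast
  ring

/-- the dual certificate `Z = I − n⃗·σ⃗` is positive semidefinite,
coincides with `M₁ + M₂ − n⃗·σ⃗`, has `tr(Zρ) = 1 − p`, and hence any feasible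
unambiguous decomposition has guessing probability at most `1 − p`. -/
theorem qubit_unambiguous_dual_certificate
    (mv nv : Fin 3 → ℝ)
    (hmm : ∑ i, mv i * mv i = 1) (hnn : ∑ i, nv i * nv i = 1)
    (hmn : ∑ i, mv i * nv i = 0)
    (m p : ℝ) (hm : 0 ≤ m) (hp : 0 ≤ p) (hr : m ^ 2 + p ^ 2 < 1) (hmp : m + p ≤ 1)
    (ρ Z M₁ M₂ : Matrix (Fin 2) (Fin 2) ℂ)
    (hρ : ρ = (2⁻¹ : ℝ) • ((1 : Matrix (Fin 2) (Fin 2) ℂ) + pauli (m • mv + p • nv)))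
    (hZ : Z = 1 - pauli nv)
    (hM₁ : M₁ = (2⁻¹ : ℝ) • ((1 : Matrix (Fin 2) (Fin 2) ℂ) + pauli mv))
    (hM₂ : M₂ = (2⁻¹ : ℝ) • ((1 : Matrix (Fin 2) (Fin 2) ℂ) - pauli mv)) :
    Z.PosSemidef ∧
    Z = M₁ + M₂ - pauli nv ∧
    (Z * ρ).trace = ((1 - p : ℝ) : ℂ) ∧
    ∀ p₁ p₂ : ℝ, 0 ≤ p₁ → 0 ≤ p₂ →
      (ρ - (p₁ • M₁ + p₂ • M₂)).PosSemidef → p₁ + p₂ ≤ 1 - p := by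
  have hZh : Zᴴ = Z := by
    rw [hZ]
    simp [Matrix.conjTranspose_sub, pauli_conjT]
  have hZsq : Z * Z = Z + Z := by
    rw [hZ, sub_mul, mul_sub, mul_sub, Matrix.one_mul, Matrix.one_mul, Matrix.mul_one,
      pauli_mul_self nv hnn]
    abel
  set c : ℝ := (Real.sqrt 2)⁻¹ with hc
  set C : Matrix (Fin 2) (Fin 2) ℂ := (c : ℂ) • Z with hCdef
  have hcc : (c : ℂ) * c = ((2⁻¹ : ℝ) : ℂ) := by
    have : c * c = 2⁻¹ := by
      rw [hc, ← mul_inv]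
      rw [Real.mul_self_sqrt (by norm_num)]
    exact_mod_cast congrArg Complex.ofReal this
  have hC : Z = Cᴴ * C := by
    rw [hCdef, Matrix.conjTranspose_smul, hZh, Matrix.smul_mul, Matrix.mul_smul,
      hZsq, smul_smul]
    rw [Complex.star_def, Complex.conj_ofReal, hcc]
    push_cast
    module
  have hPSD : Z.PosSemidef := by
    rw [hC]; exact Matrix.posSemidef_conjTranspose_mul_self C
  refine ⟨hPSD, ?_, ?_, ?_⟩
  · rw [hZ, hM₁, hM₂]
    module
  · -- trace (Z * ρ) = 1 - p
    rw [hZ, hρ, trace_key]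
    have key : ∑ i, nv i * ((m • mv + p • nv) i) = p := by
      simp only [Pi.add_apply, Pi.smul_apply, smul_eq_mul]
      rw [Fin.sum_univ_three] at hnn hmn ⊢
      linear_combination m * hmn + p * hnn
    rw [key]
  · intro p₁ p₂ h1 h2 hpsd
    have hZM₁ : (Z * M₁).trace = 1 := by
      rw [hZ, hM₁, trace_key]
      have : ∑ i, nv i * mv i = 0 := by
        rw [Fin.sum_univ_three] at hmn ⊢; linarith
      rw [this]; norm_num
    have hZM₂ : (Z * M₂).trace = 1 := by
      have hM₂' : M₂ = (2⁻¹ : ℝ) • ((1 : Matrix (Fin 2) (Fin 2) ℂ) + pauli (-mv)) := by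
        rw [hM₂, pauli_neg, sub_eq_add_neg]
      rw [hZ, hM₂', trace_key]
      have : ∑ i, nv i * (-mv) i = 0 := by
        simp only [Pi.neg_apply]
        rw [Fin.sum_univ_three] at hmn ⊢; linarith
      rw [this]; norm_num
    have hZρ : (Z * ρ).trace = ((1 - p : ℝ) : ℂ) := by
      rw [hZ, hρ, trace_key]
      have key : ∑ i, nv i * ((m • mv + p • nv) i) = p := by
        simp only [Pi.add_apply, Pi.smul_apply, smul_eq_mul]
        rw [Fin.sum_univ_three] at hnn hmn ⊢
        linear_combination m * hmn + p * hnn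
      rw [key]
    have htr : 0 ≤ (Z * (ρ - (p₁ • M₁ + p₂ • M₂))).trace := by
      rw [hC, ← Matrix.trace_mul_cycle]
      exact psd_trace_nonneg (hpsd.mul_mul_conjTranspose_same C)
    rw [Matrix.mul_sub, Matrix.mul_add, Matrix.trace_sub, Matrix.trace_add,
      mul_smul_comm, mul_smul_comm, Matrix.trace_smul, Matrix.trace_smul,
      hZρ, hZM₁, hZM₂] at htr
    have : (0 : ℂ) ≤ ((1 - p - (p₁ + p₂) : ℝ) : ℂ) := by
      convert htr using 1
      push_cast [Complex.real_smul]
      ring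
    rw [Complex.zero_le_real] at this
    linarith
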